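/- Let γ : ℤ × ℤ → ℂ be antisymmetric and satisfy γ(m,n+k) + γ(n,k+m) + γ(k,m+n) = 0 for all m,n,k ∈ ℤ. Then for every level l ≠ 0 and every n ∈ ℤ, γ(n, l-n) = 0. Consequently γ is supported on pairs of level zero and determined by the single value γ(1,-1). -/

import Mathlib

/-- For an antisymmetric `γ : ℤ × ℤ → ℂ` satisfying the cyclic recursion,
`γ` vanishes at every level `l ≠ 0`; consequently it is supported on level
zero and determined by the single value `γ(1,-1)`. -/
theorem stmt_18 (γ : ℤ → ℤ → ℂ)
    (hanti : ∀ n m : ℤ, γ n m = -γ m n)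
    (hrec : ∀ m n k : ℤ, γ m (n + k) + γ n (k + m) + γ k (m + n) = 0) :
    (∀ l n : ℤ, l ≠ 0 → γ n (l - n) = 0) ∧
    (∀ n m : ℤ, n + m ≠ 0 → γ n m = 0) ∧
    (∀ n : ℤ, γ n (-n) = (n : ℂ) * γ 1 (-1)) := by
  -- γ 0 s = 0 for all s
  have hzero : ∀ s : ℤ, γ 0 s = 0 := by
    intro s
    have key := hrec s 0 0
    norm_num at key
    rw [hanti s 0] at key
    linear_combination key
  -- additivity at each level
  have hadd : ∀ l m n : ℤ, γ (m + n) (l - (m + n)) = γ m (l - m) + γ n (l - n) := by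
    intro l m n
    have key := hrec m n (l - m - n)
    have e1 : n + (l - m - n) = l - m := by ring
    have e2 : l - m - n + m = l - n := by ring
    rw [e1, e2, hanti (l - m - n) (m + n)] at key
    have e3 : l - m - n = l - (m + n) := by ring
    rw [e3] at key
    linear_combination -key
  have hneg1 : ∀ l : ℤ, γ (-1) (l - (-1)) = -γ 1 (l - 1) := by
    intro l
    have h := hadd l (-1) 1
    have e : (-1 : ℤ) + 1 = 0 := by ring
    rw [e] at h
    have e2 : l - 0 = l := by ring
    rw [e2, hzero l] at h
    linear_combination -h
  have hmul : ∀ l c : ℤ, γ c (l - c) = (c : ℂ) * γ 1 (l - 1) := by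
    intro l c
    induction c using Int.induction_on with
    | zero =>
        have e : l - 0 = l := by ring
        rw [e, hzero l]; simp
    | succ k ih =>
        have h := hadd l k 1
        rw [ih] at h
        rw [h]
        push_cast
        ring
    | pred k ih =>
        have e : (-(k:ℤ) - 1) = -(k:ℤ) + -1 := by ring
        rw [e, hadd l (-k) (-1), ih, hneg1 l]
        push_cast
        ring
  have part1 : ∀ l n : ℤ, l ≠ 0 → γ n (l - n) = 0 := by
    intro l n hl
    have hl1 : γ l (l - l) = (l : ℂ) * γ 1 (l - 1) := hmul l l
    have e : l - l = 0 := by ring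
    rw [e, hanti l 0, hzero l] at hl1
    have hlC : (l : ℂ) ≠ 0 := by exact_mod_cast hl
    have h1 : γ 1 (l - 1) = 0 := by
      field_simp at hl1
      simpa [hlC] using hl1.symm
    rw [hmul l n, h1, mul_zero]
  refine ⟨part1, ?_, ?_⟩
  · intro n m hnm
    have := part1 (n + m) n hnm
    have e : n + m - n = m := by ring
    rwa [e] at this
  · intro n
    have := hmul 0 n
    simpa using this
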